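/- arXiv:2512.06672 — 2 statements merged into one kernel-verified Lean document; each statement's English description precedes it below -/
import Mathlib

section
/- Let n ≥ 2 and ζ = exp(2πi/n). Then Σ_{1≤i<j≤n-1} [1/((1-ζ^i)(1-ζ^j)²) + 1/((1-ζ^i)²(1-ζ^j))] = -(n-1)(n-2)(n-7)/24. -/
open Complex Finset Polynomial

theorem double_sum_helper (N : ℕ) (f : ℕ → ℕ → ℂ) :
    ∑ i ∈ Icc 1 N, ∑ j ∈ Ioc i N, (f i j + f j i)
      = (∑ i ∈ Icc 1 N, ∑ j ∈ Icc 1 N, f i j) - ∑ i ∈ Icc 1 N, f i i := by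
  have hswap : ∑ i ∈ Icc 1 N, ∑ j ∈ Ioc i N, f j i
      = ∑ j ∈ Icc 1 N, ∑ i ∈ Ico 1 j, f j i := by
    apply Finset.sum_comm'
    intro x y
    simp only [mem_Icc, mem_Ioc, mem_Ico]
    omega
  have hsplit : ∀ i ∈ Icc 1 N, ∑ j ∈ Icc 1 N, f i j
      = ∑ j ∈ Ioc i N, f i j + ∑ j ∈ Ico 1 i, f i j + f i i := by
    intro i hi
    rw [mem_Icc] at hi
    have h1 : Icc 1 N = Icc 1 i ∪ Ioc i N := by
      ext a; simp only [mem_Icc, mem_union, mem_Ioc]; omega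
    have h2 : Disjoint (Icc 1 i) (Ioc i N) := by
      rw [Finset.disjoint_left]; intro a; simp only [mem_Icc, mem_Ioc]; omega
    rw [h1, Finset.sum_union h2]
    have h3 : Icc 1 i = insert i (Ico 1 i) := by
      ext a; simp only [mem_insert, mem_Icc, mem_Ico]; omega
    rw [h3, Finset.sum_insert (by simp)]
    ring
  rw [Finset.sum_congr rfl hsplit]
  simp only [Finset.sum_add_distrib, hswap]
  ring

theorem derivative_fin_prod {R ι : Type*} [CommRing R] [DecidableEq ι] (s : Finset ι) (f : ι → R[X]) :
    derivative (∏ i ∈ s, f i) = ∑ i ∈ s, (∏ j ∈ s.erase i, f j) * derivative (f i) := by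
  have h1 : ∏ i ∈ s, f i = (Multiset.map f s.val).prod := rfl
  rw [h1, derivative_prod]
  rw [Finset.sum]
  apply congrArg
  apply Multiset.map_congr rfl
  intro i hi
  simp [Finset.prod, Finset.erase_val]

theorem gauss1 (n : ℕ) : ∑ i ∈ range n, (i : ℂ) = n * (n - 1) / 2 := by
  induction n with
  | zero => simp
  | succ m ih => rw [Finset.sum_range_succ, ih]; push_cast; ring

theorem gauss2 (n : ℕ) : ∑ i ∈ range n, (i : ℂ) * ((i : ℂ) - 1) = n * (n - 1) * (n - 2) / 3 := by
  induction n with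
  | zero => simp
  | succ m ih => rw [Finset.sum_range_succ, ih]; push_cast; ring

theorem aux_prod (n : ℕ) (hn : 2 ≤ n) (ζ : ℂ) (hp : IsPrimitiveRoot ζ n) :
    (X : ℂ[X]) ^ n - 1 = ∏ k ∈ range n, (X - C (ζ ^ k)) := by
  have : NeZero n := ⟨by omega⟩
  rw [X_pow_sub_one_eq_prod (by omega) hp]
  have h1 : nthRootsFinset n (1:ℂ) = (range n).image (ζ ^ ·) := by
    ext x
    simp only [mem_nthRootsFinset (show 0 < n by omega), mem_image, mem_range]
    constructor
    · intro hx
      obtain ⟨i, hi, rfl⟩ := hp.eq_pow_of_pow_eq_one hx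
      exact ⟨i, hi, rfl⟩
    · rintro ⟨i, hi, rfl⟩
      rw [← pow_mul, mul_comm, pow_mul, hp.pow_eq_one, one_pow]
  rw [h1, Finset.prod_image]
  intro a ha b hb hab
  exact hp.pow_inj (mem_range.mp ha) (mem_range.mp hb) hab

theorem aux_geom (n : ℕ) (hn : 2 ≤ n) (ζ : ℂ) (hp : IsPrimitiveRoot ζ n) :
    ∏ k ∈ Icc 1 (n-1), ((X : ℂ[X]) - C (ζ ^ k)) = ∑ i ∈ range n, (X : ℂ[X]) ^ i := by
  have hprod := aux_prod n hn ζ hp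
  have hr : range n = insert 0 (Icc 1 (n-1)) := by
    ext x; simp only [mem_insert, mem_Icc, mem_range]; omega
  rw [hr, Finset.prod_insert (by simp)] at hprod
  have h2 : ((X : ℂ[X]) - 1) * ∑ i ∈ range n, (X : ℂ[X]) ^ i = (X:ℂ[X])^n - 1 := by
    rw [mul_comm]; exact geom_sum_mul X n
  have hX1 : (X : ℂ[X]) - 1 ≠ 0 := by
    intro h
    have := congrArg (Polynomial.eval 2) h
    norm_num at this
  apply mul_left_cancel₀ hX1
  rw [h2, hprod]
  simp

theorem key_sums (n : ℕ) (hn : 2 ≤ n) (ζ : ℂ) (hp : IsPrimitiveRoot ζ n) :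
    (∑ k ∈ Icc 1 (n-1), ((1:ℂ) - ζ ^ k)⁻¹ = ((n:ℂ) - 1) / 2) ∧
    (∑ k ∈ Icc 1 (n-1), (((1:ℂ) - ζ ^ k)⁻¹) ^ 2 = ((n:ℂ) - 1) * (5 - (n:ℂ)) / 12) := by
  classical
  set s : Finset ℕ := Icc 1 (n-1) with hs
  have hn0 : (n : ℂ) ≠ 0 := by
    simp only [ne_eq, Nat.cast_eq_zero]; omega
  have hne : ∀ k ∈ s, (1:ℂ) - ζ ^ k ≠ 0 := by
    intro k hk h
    rw [mem_Icc] at hk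
    have h1 : ζ ^ k = 1 := by linear_combination -h
    rw [hp.pow_eq_one_iff_dvd] at h1
    have := Nat.le_of_dvd (by omega) h1
    omega
  have hP := aux_geom n hn ζ hp
  have hPn : ∏ k ∈ s, ((1:ℂ) - ζ ^ k) = n := by
    have := congrArg (eval 1) hP
    simpa [eval_prod, eval_finset_sum] using this
  have hErase : ∀ k ∈ s, ∏ j ∈ s.erase k, ((1:ℂ) - ζ ^ j) = n * ((1:ℂ) - ζ ^ k)⁻¹ := by
    intro k hk
    have h1 := Finset.mul_prod_erase s (fun j => (1:ℂ) - ζ ^ j) hk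
    rw [hPn] at h1
    field_simp [hne k hk]
    linear_combination h1
  -- first derivative
  have hDP : derivative (∏ k ∈ s, ((X:ℂ[X]) - C (ζ ^ k)))
      = ∑ k ∈ s, ∏ j ∈ s.erase k, ((X:ℂ[X]) - C (ζ ^ j)) := by
    rw [derivative_fin_prod]
    refine Finset.sum_congr rfl fun k hk => ?_
    rw [derivative_sub, derivative_X, derivative_C, sub_zero, mul_one]
  have hD1 : ∑ k ∈ s, ∏ j ∈ s.erase k, ((1:ℂ) - ζ ^ j) = (n:ℂ) * ((n:ℂ) - 1) / 2 := by
    have h := congrArg (fun p => eval 1 (derivative p)) hP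
    rw [← hs, hDP] at h
    rw [map_sum] at h
    simp only [derivative_X_pow] at h
    simp only [eval_finset_sum, eval_prod, eval_mul, eval_pow, eval_sub, eval_X, eval_C,
      eval_one, one_pow, mul_one] at h
    rw [h, gauss1]
  have hT1 : ∑ k ∈ s, ((1:ℂ) - ζ ^ k)⁻¹ = ((n:ℂ) - 1) / 2 := by
    rw [Finset.sum_congr rfl hErase, ← Finset.mul_sum] at hD1
    apply mul_left_cancel₀ hn0
    rw [hD1]; ring
  refine ⟨hT1, ?_⟩
  -- second derivative
  have hErase2 : ∀ k ∈ s, ∀ l ∈ s.erase k,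
      ∏ j ∈ (s.erase k).erase l, ((1:ℂ) - ζ ^ j)
        = (n:ℂ) * ((1:ℂ) - ζ ^ k)⁻¹ * ((1:ℂ) - ζ ^ l)⁻¹ := by
    intro k hk l hl
    have h1 := Finset.mul_prod_erase (s.erase k) (fun j => (1:ℂ) - ζ ^ j) hl
    rw [hErase k hk] at h1
    have hls : l ∈ s := Finset.mem_of_mem_erase hl
    field_simp [hne k hk, hne l hls]
    field_simp [hne k hk] at h1
    linear_combination h1
  have hD2 : ∑ k ∈ s, ∑ l ∈ s.erase k, ∏ j ∈ (s.erase k).erase l, ((1:ℂ) - ζ ^ j)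
      = (n:ℂ) * ((n:ℂ) - 1) * ((n:ℂ) - 2) / 3 := by
    have hInner : ∀ k ∈ s, derivative (∏ j ∈ s.erase k, ((X:ℂ[X]) - C (ζ ^ j)))
        = ∑ l ∈ s.erase k, ∏ j ∈ (s.erase k).erase l, ((X:ℂ[X]) - C (ζ ^ j)) := by
      intro k hk; rw [derivative_fin_prod]
      refine Finset.sum_congr rfl fun l hl => ?_
      rw [derivative_sub, derivative_X, derivative_C, sub_zero, mul_one]
    have hL : eval 1 (derivative (derivative (∏ k ∈ s, ((X:ℂ[X]) - C (ζ ^ k)))))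
        = ∑ k ∈ s, ∑ l ∈ s.erase k, ∏ j ∈ (s.erase k).erase l, ((1:ℂ) - ζ ^ j) := by
      rw [hDP, map_sum, Finset.sum_congr rfl hInner, eval_finset_sum]
      refine Finset.sum_congr rfl fun k hk => ?_
      rw [eval_finset_sum]
      refine Finset.sum_congr rfl fun l hl => ?_
      rw [eval_prod]
      exact Finset.prod_congr rfl fun j hj => by rw [eval_sub, eval_X, eval_C]
    have hR : eval 1 (derivative (derivative (∑ i ∈ range n, (X:ℂ[X]) ^ i)))
        = ∑ i ∈ range n, (i:ℂ) * ((i - 1 : ℕ) : ℂ) := by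
      rw [map_sum, map_sum, eval_finset_sum]
      refine Finset.sum_congr rfl fun i _ => ?_
      simp [derivative_X_pow]
    have hkey : ∑ k ∈ s, ∑ l ∈ s.erase k, ∏ j ∈ (s.erase k).erase l, ((1:ℂ) - ζ ^ j)
        = ∑ i ∈ range n, (i:ℂ) * ((i - 1 : ℕ) : ℂ) := by
      rw [← hL, ← hR, hP]
    rw [hkey]
    have hc : ∀ i ∈ range n, (i:ℂ) * ((i - 1 : ℕ):ℂ) = (i:ℂ) * ((i:ℂ) - 1) := by
      intro i _
      rcases i with _ | m
      · simp
      · push_cast [Nat.succ_sub_one]; ring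
    rw [Finset.sum_congr rfl hc, gauss2]
  have hstep : ∑ k ∈ s, ((n:ℂ) * ((1:ℂ) - ζ ^ k)⁻¹ * (((n:ℂ) - 1) / 2 - ((1:ℂ) - ζ ^ k)⁻¹))
      = (n:ℂ) * ((n:ℂ) - 1) * ((n:ℂ) - 2) / 3 := by
    rw [← hD2]
    apply Finset.sum_congr rfl
    intro k hk
    rw [Finset.sum_congr rfl (hErase2 k hk), ← Finset.mul_sum,
      Finset.sum_erase_eq_sub hk, hT1]
  have hexp : ∑ k ∈ s, ((n:ℂ) * ((1:ℂ) - ζ ^ k)⁻¹ * (((n:ℂ) - 1) / 2 - ((1:ℂ) - ζ ^ k)⁻¹))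
      = (n:ℂ) * (((n:ℂ) - 1) / 2) * (∑ k ∈ s, ((1:ℂ) - ζ ^ k)⁻¹)
        - (n:ℂ) * ∑ k ∈ s, (((1:ℂ) - ζ ^ k)⁻¹) ^ 2 := by
    rw [Finset.mul_sum, Finset.mul_sum, ← Finset.sum_sub_distrib]
    exact Finset.sum_congr rfl fun k _ => by ring
  rw [hexp, hT1] at hstep
  have : (n:ℂ) * (∑ k ∈ s, (((1:ℂ) - ζ ^ k)⁻¹) ^ 2) = (n:ℂ) * (((n:ℂ) - 1) * (5 - (n:ℂ)) / 12) := by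
    linear_combination -hstep
  exact mul_left_cancel₀ hn0 this

theorem T3_lemma (n : ℕ) (hn : 2 ≤ n) (ζ : ℂ) (hp : IsPrimitiveRoot ζ n)
    (hT1 : ∑ k ∈ Icc 1 (n-1), ((1:ℂ) - ζ ^ k)⁻¹ = ((n:ℂ) - 1) / 2)
    (hT2 : ∑ k ∈ Icc 1 (n-1), (((1:ℂ) - ζ ^ k)⁻¹) ^ 2 = ((n:ℂ) - 1) * (5 - (n:ℂ)) / 12) :
    ∑ k ∈ Icc 1 (n-1), (((1:ℂ) - ζ ^ k)⁻¹) ^ 3 = ((n:ℂ) - 1) * (3 - (n:ℂ)) / 8 := by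
  set s : Finset ℕ := Icc 1 (n-1) with hs
  have hne : ∀ k ∈ s, (1:ℂ) - ζ ^ k ≠ 0 := by
    intro k hk h
    rw [hs, mem_Icc] at hk
    have h1 : ζ ^ k = 1 := by linear_combination -h
    rw [hp.pow_eq_one_iff_dvd] at h1
    have := Nat.le_of_dvd (by omega) h1
    omega
  have hz0 : ζ ≠ 0 := hp.ne_zero (by omega)
  have hinv : ∀ k ∈ s, ((1:ℂ) - ζ ^ (n - k))⁻¹ = 1 - ((1:ℂ) - ζ ^ k)⁻¹ := by
    intro k hk
    have hk' := hk
    rw [hs, mem_Icc] at hk'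
    have hmem : n - k ∈ s := by rw [hs, mem_Icc]; omega
    have hzk : ζ ^ (n - k) * ζ ^ k = 1 := by
      rw [← pow_add, Nat.sub_add_cancel (by omega), hp.pow_eq_one]
    have h1 := hne k hk
    have h2 := hne (n - k) hmem
    field_simp
    linear_combination -hzk
  have hflip : ∑ k ∈ s, (((1:ℂ) - ζ ^ k)⁻¹) ^ 3
      = ∑ k ∈ s, (1 - ((1:ℂ) - ζ ^ k)⁻¹) ^ 3 := by
    refine Finset.sum_nbij' (fun k => n - k) (fun k => n - k) ?_ ?_ ?_ ?_ ?_
    · intro a ha; simp only [hs, mem_Icc] at ha ⊢; omega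
    · intro a ha; simp only [hs, mem_Icc] at ha ⊢; omega
    · intro a ha; simp only [hs, mem_Icc] at ha ⊢; omega
    · intro a ha; simp only [hs, mem_Icc] at ha ⊢; omega
    · intro a ha
      have hmem : a ∈ s := ha
      rw [hinv a hmem, sub_sub_cancel]
  have hcard : (s.card : ℂ) = (n:ℂ) - 1 := by
    rw [hs, Nat.card_Icc]
    have : n - 1 + 1 - 1 = n - 1 := by omega
    rw [this]
    push_cast [Nat.cast_sub (by omega : 1 ≤ n)]
    ring
  have hexpand : ∑ k ∈ s, (1 - ((1:ℂ) - ζ ^ k)⁻¹) ^ 3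
      = (s.card : ℂ) - 3 * (((n:ℂ) - 1) / 2) + 3 * (((n:ℂ) - 1) * (5 - (n:ℂ)) / 12)
        - ∑ k ∈ s, (((1:ℂ) - ζ ^ k)⁻¹) ^ 3 := by
    have h1 : ∀ k ∈ s, (1 - ((1:ℂ) - ζ ^ k)⁻¹) ^ 3
        = 1 - 3 * ((1:ℂ) - ζ ^ k)⁻¹ + 3 * (((1:ℂ) - ζ ^ k)⁻¹) ^ 2 - (((1:ℂ) - ζ ^ k)⁻¹) ^ 3 := by
      intro k _; ring
    rw [Finset.sum_congr rfl h1]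
    rw [Finset.sum_sub_distrib, Finset.sum_add_distrib, Finset.sum_sub_distrib,
      ← Finset.mul_sum, ← Finset.mul_sum, hT1, hT2, Finset.sum_const, nsmul_eq_mul, mul_one]
  rw [hexpand, hcard] at hflip
  linear_combination hflip / 2

theorem qmzv_12_add_21 (n : ℕ) (hn : 2 ≤ n)
    (ζ : ℂ) (hζ : ζ = Complex.exp (2 * Real.pi * Complex.I / n)) :
    ∑ i ∈ Finset.Icc 1 (n - 1), ∑ j ∈ Finset.Ioc i (n - 1),
        (1 / ((1 - ζ ^ i) * (1 - ζ ^ j) ^ 2) + 1 / ((1 - ζ ^ i) ^ 2 * (1 - ζ ^ j))) =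
      -(((n : ℂ) - 1) * ((n : ℂ) - 2) * ((n : ℂ) - 7)) / 24 := by
  have hp : IsPrimitiveRoot ζ n := by
    rw [hζ]; exact Complex.isPrimitiveRoot_exp n (by omega)
  obtain ⟨hT1, hT2⟩ := key_sums n hn ζ hp
  have hT3 := T3_lemma n hn ζ hp hT1 hT2
  set f : ℕ → ℕ → ℂ := fun i j => ((1:ℂ) - ζ ^ i)⁻¹ * (((1:ℂ) - ζ ^ j)⁻¹) ^ 2 with hf
  have hterms : ∀ i ∈ Icc 1 (n-1), ∀ j ∈ Ioc i (n-1),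
      (1 / ((1 - ζ ^ i) * (1 - ζ ^ j) ^ 2) + 1 / ((1 - ζ ^ i) ^ 2 * (1 - ζ ^ j)))
        = f i j + f j i := by
    intro i _ j _
    rw [hf]
    simp only [one_div, mul_inv, inv_pow]
    ring
  have hred : ∑ i ∈ Icc 1 (n-1), ∑ j ∈ Ioc i (n-1),
      (1 / ((1 - ζ ^ i) * (1 - ζ ^ j) ^ 2) + 1 / ((1 - ζ ^ i) ^ 2 * (1 - ζ ^ j)))
      = ∑ i ∈ Icc 1 (n-1), ∑ j ∈ Ioc i (n-1), (f i j + f j i) := by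
    refine Finset.sum_congr rfl fun i hi => Finset.sum_congr rfl fun j hj => ?_
    exact hterms i hi j hj
  rw [hred, double_sum_helper (n-1) f]
  have hfull : ∑ i ∈ Icc 1 (n-1), ∑ j ∈ Icc 1 (n-1), f i j
      = (((n:ℂ) - 1) / 2) * (((n:ℂ) - 1) * (5 - (n:ℂ)) / 12) := by
    have h1 : ∀ i ∈ Icc 1 (n-1), ∑ j ∈ Icc 1 (n-1), f i j
        = ((1:ℂ) - ζ ^ i)⁻¹ * (((n:ℂ) - 1) * (5 - (n:ℂ)) / 12) := by
      intro i _
      rw [hf]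
      simp only
      rw [← Finset.mul_sum, hT2]
    rw [Finset.sum_congr rfl h1, ← Finset.sum_mul, hT1]
  have hdiag : ∑ i ∈ Icc 1 (n-1), f i i = ((n:ℂ) - 1) * (3 - (n:ℂ)) / 8 := by
    rw [← hT3]
    refine Finset.sum_congr rfl fun i _ => ?_
    rw [hf]
    simp only
    ring
  rw [hfull, hdiag]
  ring
end

section
/- Let n ≥ 2 and ζ = exp(2πi/n). Then Σ_{1≤i≤j≤n-1} [(1-ζ^i)^{-1}(1-ζ^j)^{-2} + (1-ζ^i)^{-2}(1-ζ^j)^{-1}] = -(n+1)(n-1)(n-4)/24. -/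
open Complex Finset

lemma csum_id (n : ℕ) : ∑ j ∈ range n, (j:ℂ) = n*(n-1)/2 := by
  induction n with
  | zero => simp
  | succ m ih => rw [sum_range_succ, ih]; push_cast; ring

lemma csum_sq (n : ℕ) : ∑ j ∈ range n, (j:ℂ)^2 = n*(n-1)*(2*n-1)/6 := by
  induction n with
  | zero => simp
  | succ m ih => rw [sum_range_succ, ih]; push_cast; ring

lemma key_poly (x : ℂ) (n : ℕ) :
    (x - 1) * ∑ j ∈ range n, (j:ℂ) * x^j
      = ((n:ℂ)-1)*x^n - ∑ j ∈ range n, x^j + 1 := by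
  induction n with
  | zero => simp
  | succ m ih =>
    rw [sum_range_succ, sum_range_succ, mul_add, ih]
    push_cast; ring

lemma inv_one_sub (n : ℕ) (hn : 0 < n) (x : ℂ) (hxn : x^n = 1) (hx : x ≠ 1) :
    (1 - x)⁻¹ = -(1/n) * ∑ j ∈ range n, (j:ℂ) * x^j := by
  have hx1 : x - 1 ≠ 0 := sub_ne_zero.mpr hx
  have hg : ∑ j ∈ range n, x^j = 0 := by
    rw [geom_sum_eq hx, hxn, sub_self, zero_div]
  have hk := key_poly x n
  rw [hxn, hg] at hk
  have hn0 : (n:ℂ) ≠ 0 := Nat.cast_ne_zero.mpr hn.ne'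
  have hx2 : (1:ℂ) - x ≠ 0 := sub_ne_zero.mpr (Ne.symm hx)
  have hS : ∑ j ∈ range n, (j:ℂ) * x^j = n/(x-1) := by
    rw [eq_div_iff hx1]; linear_combination hk
  rw [hS]; field_simp; ring

lemma triangle (n : ℕ) (f g : ℕ → ℂ) :
    ∑ i ∈ Ico 1 n, ∑ j ∈ Ico i n, (f i * g j + g i * f j)
      = (∑ i ∈ Ico 1 n, f i) * (∑ j ∈ Ico 1 n, g j) + ∑ i ∈ Ico 1 n, (f i * g i) := by
  simp_rw [Finset.sum_add_distrib]
  rw [Finset.sum_Ico_Ico_comm 1 n (fun i j => g i * f j)]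
  have h1 : ∀ i ∈ Ico 1 n, ∑ j ∈ Ico i n, f i * g j = f i * ∑ j ∈ Ico i n, g j :=
    fun i _ => (Finset.mul_sum _ _ _).symm
  have h2 : ∀ i ∈ Ico 1 n, ∑ k ∈ Ico 1 (i+1), g k * f i = f i * ∑ k ∈ Ico 1 (i+1), g k := by
    intro i _; rw [← Finset.sum_mul]; ring
  rw [Finset.sum_congr rfl h1, Finset.sum_congr rfl h2, ← Finset.sum_add_distrib,
    Finset.sum_mul, ← Finset.sum_add_distrib]
  refine Finset.sum_congr rfl fun i hi => ?_
  simp only [Finset.mem_Ico] at hi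
  have hsplit : ∑ k ∈ Ico 1 (i+1), g k = (∑ k ∈ Ico 1 i, g k) + g i := by
    rw [Finset.sum_Ico_succ_top (by omega)]
  have hcons : (∑ k ∈ Ico 1 i, g k) + ∑ j ∈ Ico i n, g j = ∑ j ∈ Ico 1 n, g j :=
    Finset.sum_Ico_consecutive _ (by omega) (by omega)
  rw [hsplit]
  ring_nf
  linear_combination (f i) * hcons

lemma sum_reflect (n : ℕ) (F : ℕ → ℂ) :
    ∑ k ∈ Ico 1 n, F k = ∑ k ∈ Ico 1 n, F (n - k) := by
  rw [Finset.sum_Ico_eq_sum_range, Finset.sum_Ico_eq_sum_range]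
  rw [← Finset.sum_range_reflect]
  refine Finset.sum_congr rfl fun j hj => ?_
  simp only [Finset.mem_range] at hj
  congr 1
  omega

lemma pair1 (x y : ℂ) (hxy : x * y = 1) (hx : x ≠ 1) (hy : y ≠ 1) :
    (1-x)⁻¹ + (1-y)⁻¹ = 1 := by
  have h1 : (1:ℂ) - x ≠ 0 := sub_ne_zero.mpr (Ne.symm hx)
  have h2 : (1:ℂ) - y ≠ 0 := sub_ne_zero.mpr (Ne.symm hy)
  field_simp
  linear_combination -hxy

lemma pair3 (x y : ℂ) (hxy : x * y = 1) (hx : x ≠ 1) (hy : y ≠ 1) :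
    ((1-x)⁻¹)^3 + ((1-y)⁻¹)^3 = 1 - 3*(1-x)⁻¹ + 3*((1-x)⁻¹)^2 := by
  have h1 : (1:ℂ) - x ≠ 0 := sub_ne_zero.mpr (Ne.symm hx)
  have h2 : (1:ℂ) - y ≠ 0 := sub_ne_zero.mpr (Ne.symm hy)
  field_simp
  linear_combination (-1 + 3*x - 1*x*y - 3*x^2 + 3*x^2*y - 1*x^2*y^2) * hxy

lemma Dsum (n : ℕ) (hn : 2 ≤ n) :
    ∑ j1 ∈ range n, ∑ j2 ∈ range n, (if n ∣ j1 + j2 then (j1:ℂ)*(j2:ℂ) else 0)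
      = (n:ℂ)*((n:ℂ)-1)*((n:ℂ)+1)/6 := by
  have h1 : ∀ j1 ∈ range n,
      (∑ j2 ∈ range n, (if n ∣ j1 + j2 then (j1:ℂ)*(j2:ℂ) else 0))
        = (j1:ℂ) * ((n:ℂ) - (j1:ℂ)) := by
    intro j1 hj1
    simp only [Finset.mem_range] at hj1
    rcases Nat.eq_zero_or_pos j1 with h0 | hpos
    · subst h0
      rw [Finset.sum_eq_zero]
      · simp
      · intro j2 hj2
        simp only [Finset.mem_range] at hj2
        split
        · simp
        · rfl
    · rw [Finset.sum_eq_single_of_mem (n - j1) (by simp only [Finset.mem_range]; omega)]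
      · have : n ∣ j1 + (n - j1) := by
          have : j1 + (n - j1) = n := by omega
          rw [this]
        rw [if_pos this]
        have : ((n - j1 : ℕ) : ℂ) = (n:ℂ) - (j1:ℂ) := by
          push_cast [Nat.cast_sub (by omega : j1 ≤ n)]; ring
        rw [this]
      · intro j2 hj2 hne
        simp only [Finset.mem_range] at hj2
        rw [if_neg]
        intro hdvd
        obtain ⟨c, hc⟩ := hdvd
        rcases c with _ | _ | c
        · omega
        · omega
        · have hc' : j1 + j2 = n*c + 2*n := by rw [hc]; ring
          omega
  rw [Finset.sum_congr rfl h1]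
  have h2 : ∀ j1 ∈ range n, (j1:ℂ) * ((n:ℂ) - (j1:ℂ)) = (n:ℂ)*(j1:ℂ) - (j1:ℂ)^2 := by
    intro j1 _; ring
  rw [Finset.sum_congr rfl h2, Finset.sum_sub_distrib, ← Finset.mul_sum, csum_id, csum_sq]
  have hn0 : (n:ℂ) ≠ 0 := Nat.cast_ne_zero.mpr (by omega)
  field_simp
  ring

theorem qmzv_star_12_add_21 (n : ℕ) (hn : 2 ≤ n)
    (ζ : ℂ) (hζ : ζ = Complex.exp (2 * Real.pi * Complex.I / n)) :
    ∑ i ∈ Finset.Icc 1 (n - 1), ∑ j ∈ Finset.Icc i (n - 1),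
        ((1 - ζ ^ i)⁻¹ * ((1 - ζ ^ j) ^ 2)⁻¹ +
          ((1 - ζ ^ i) ^ 2)⁻¹ * (1 - ζ ^ j)⁻¹) =
      -(((n : ℂ) + 1) * ((n : ℂ) - 1) * ((n : ℂ) - 4)) / 24 := by
  have hn1 : n ≠ 0 := by omega
  have hn0 : (n:ℂ) ≠ 0 := Nat.cast_ne_zero.mpr hn1
  have hprim : IsPrimitiveRoot ζ n := hζ ▸ Complex.isPrimitiveRoot_exp n hn1
  have hζn : ζ ^ n = 1 := hprim.pow_eq_one
  have hne1 : ∀ k, 1 ≤ k → k < n → ζ ^ k ≠ 1 := by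
    intro k h1 h2 h
    have hd := (hprim.pow_eq_one_iff_dvd k).mp h
    have := Nat.le_of_dvd (by omega) hd
    omega
  -- geometric sums
  have geom : ∀ m : ℕ, ∑ k ∈ Ico 1 n, ζ ^ (m * k) = (if n ∣ m then (n:ℂ) else 0) - 1 := by
    intro m
    have h0 : ∑ k ∈ range n, (ζ ^ m) ^ k = if n ∣ m then (n:ℂ) else 0 := by
      by_cases hd : n ∣ m
      · have h1 : ζ ^ m = 1 := (hprim.pow_eq_one_iff_dvd m).mpr hd
        simp [h1, hd]
      · have hne : ζ ^ m ≠ 1 := fun h => hd ((hprim.pow_eq_one_iff_dvd m).mp h)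
        rw [geom_sum_eq hne]
        have hmn : (ζ ^ m) ^ n = 1 := by rw [← pow_mul, mul_comm, pow_mul, hζn, one_pow]
        rw [hmn, sub_self, zero_div, if_neg hd]
    have h1 : ∑ k ∈ range n, (ζ ^ m) ^ k = 1 + ∑ k ∈ Ico 1 n, ζ ^ (m * k) := by
      rw [Finset.range_eq_Ico, Finset.sum_eq_sum_Ico_succ_bot (by omega : 0 < n)]
      simp [← pow_mul]
    rw [h1] at h0
    linear_combination h0
  -- S1
  have hS1 : ∑ k ∈ Ico 1 n, (1 - ζ^k)⁻¹ = ((n:ℂ)-1)/2 := by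
    have hcard : ∑ _k ∈ Ico 1 n, (1:ℂ) = (n:ℂ) - 1 := by
      rw [Finset.sum_const, Nat.card_Ico, nsmul_eq_mul, mul_one]
      push_cast [Nat.cast_sub (by omega : 1 ≤ n)]
      ring
    have h2 : (∑ k ∈ Ico 1 n, (1-ζ^k)⁻¹) + (∑ k ∈ Ico 1 n, (1-ζ^k)⁻¹)
        = ∑ _k ∈ Ico 1 n, (1:ℂ) := by
      nth_rewrite 2 [sum_reflect n (fun k => (1 - ζ^k)⁻¹)]
      rw [← Finset.sum_add_distrib]
      refine Finset.sum_congr rfl fun k hk => ?_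
      simp only [Finset.mem_Ico] at hk
      exact pair1 (ζ^k) (ζ^(n-k))
        (by rw [← pow_add, (show k + (n-k) = n by omega), hζn])
        (hne1 k hk.1 hk.2) (hne1 (n-k) (by omega) (by omega))
    rw [hcard] at h2
    linear_combination h2 / 2
  -- S2
  have hS2 : ∑ k ∈ Ico 1 n, ((1-ζ^k)⁻¹)^2 = ((n:ℂ)-1)*(5-(n:ℂ))/12 := by
    have hrw : ∀ k ∈ Ico 1 n, ((1-ζ^k)⁻¹)^2
        = (1/(n:ℂ)^2) * ∑ j1 ∈ range n, ∑ j2 ∈ range n,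
            ((j1:ℂ)*(j2:ℂ)) * ζ^((j1+j2)*k) := by
      intro k hk
      simp only [Finset.mem_Ico] at hk
      have hxn : (ζ^k)^n = 1 := by rw [← pow_mul, mul_comm, pow_mul, hζn, one_pow]
      rw [inv_one_sub n (by omega) (ζ^k) hxn (hne1 k hk.1 hk.2), mul_pow,
        pow_two (∑ j ∈ range n, (j:ℂ) * (ζ^k)^j), Finset.sum_mul_sum]
      congr 1
      · ring
      · refine Finset.sum_congr rfl fun j1 _ => Finset.sum_congr rfl fun j2 _ => ?_
        have he : (j1+j2)*k = k*j1 + k*j2 := by ring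
        rw [he, pow_add, ← pow_mul, ← pow_mul]
        ring
    rw [Finset.sum_congr rfl hrw, ← Finset.mul_sum, Finset.sum_comm]
    have hsw : ∀ j1 ∈ range n,
        ∑ k ∈ Ico 1 n, ∑ j2 ∈ range n, ((j1:ℂ)*(j2:ℂ)) * ζ^((j1+j2)*k)
          = ∑ j2 ∈ range n, ((j1:ℂ)*(j2:ℂ)) * ((if n ∣ j1+j2 then (n:ℂ) else 0) - 1) := by
      intro j1 _
      rw [Finset.sum_comm]
      refine Finset.sum_congr rfl fun j2 _ => ?_
      rw [← Finset.mul_sum, geom (j1+j2)]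
    rw [Finset.sum_congr rfl hsw]
    have hexp : ∀ j1 ∈ range n,
        ∑ j2 ∈ range n, ((j1:ℂ)*(j2:ℂ)) * ((if n ∣ j1+j2 then (n:ℂ) else 0) - 1)
          = (∑ j2 ∈ range n, (if n ∣ j1+j2 then (j1:ℂ)*(j2:ℂ) else 0)) * n
            - ∑ j2 ∈ range n, (j1:ℂ)*(j2:ℂ) := by
      intro j1 _
      rw [Finset.sum_mul, ← Finset.sum_sub_distrib]
      refine Finset.sum_congr rfl fun j2 _ => ?_
      split_ifs with h
      · ring
      · ring
    rw [Finset.sum_congr rfl hexp, Finset.sum_sub_distrib, ← Finset.sum_mul, Dsum n hn]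
    have hsq : ∑ j1 ∈ range n, ∑ j2 ∈ range n, (j1:ℂ)*(j2:ℂ)
        = (∑ j ∈ range n, (j:ℂ))^2 := by
      rw [pow_two, Finset.sum_mul_sum]
    rw [hsq, csum_id]
    field_simp
    ring
  -- S3
  have hS3 : ∑ k ∈ Ico 1 n, ((1-ζ^k)⁻¹)^3 = -(((n:ℂ)-1)*((n:ℂ)-3))/8 := by
    have h2 : (∑ k ∈ Ico 1 n, ((1-ζ^k)⁻¹)^3) + (∑ k ∈ Ico 1 n, ((1-ζ^k)⁻¹)^3)
        = ∑ k ∈ Ico 1 n, (1 - 3*(1-ζ^k)⁻¹ + 3*((1-ζ^k)⁻¹)^2) := by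
      nth_rewrite 2 [sum_reflect n (fun k => ((1 - ζ^k)⁻¹)^3)]
      rw [← Finset.sum_add_distrib]
      refine Finset.sum_congr rfl fun k hk => ?_
      simp only [Finset.mem_Ico] at hk
      exact pair3 (ζ^k) (ζ^(n-k))
        (by rw [← pow_add, (show k + (n-k) = n by omega), hζn])
        (hne1 k hk.1 hk.2) (hne1 (n-k) (by omega) (by omega))
    have hcard : ∑ _k ∈ Ico 1 n, (1:ℂ) = (n:ℂ) - 1 := by
      rw [Finset.sum_const, Nat.card_Ico, nsmul_eq_mul, mul_one]
      push_cast [Nat.cast_sub (by omega : 1 ≤ n)]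
      ring
    rw [Finset.sum_add_distrib, Finset.sum_sub_distrib, ← Finset.mul_sum, ← Finset.mul_sum,
      hcard, hS1, hS2] at h2
    linear_combination h2 / 2
  -- assemble
  have hIcc : ∀ a : ℕ, Finset.Icc a (n-1) = Finset.Ico a n := by
    intro a; rw [← Finset.Ico_add_one_right_eq_Icc]; congr 1; omega
  have hsq : ∀ j : ℕ, ((1 - ζ ^ j) ^ 2)⁻¹ = ((1 - ζ ^ j)⁻¹)^2 := fun j => (inv_pow _ _).symm
  simp_rw [hIcc, hsq]
  rw [triangle n (fun i => (1-ζ^i)⁻¹) (fun j => ((1-ζ^j)⁻¹)^2)]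
  have hdiag : ∀ i ∈ Ico 1 n, (1-ζ^i)⁻¹ * ((1-ζ^i)⁻¹)^2 = ((1-ζ^i)⁻¹)^3 :=
    fun i _ => by ring
  rw [Finset.sum_congr rfl hdiag, hS1, hS2, hS3]
  ring
end
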